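/- (Power identity) Let I ⊆ ℝ be an open interval and let (H, φ) solve the EdGB FLRW system on I. Then for every t ∈ I with H(t) ≠ 0 the following identity holds: (1 − H(t)^2·exp(φ(t)) + H'(t)/(3·H(t)^2))·φ'(t)^2 + 4·H(t)^3·φ'(t)·exp(φ(t)) + 3·H(t)^6·exp(2φ(t))·(1 + H'(t)/H(t)^2) = 0. -/

import Mathlib

/-- The EdGB FLRW system on a set `I ⊆ ℝ`: `H` is continuously differentiable and
`φ` twice continuously differentiable on `I`, and for every `t ∈ I` the Hamiltonian
constraint `3H² − 3e^φ φ' H³ = φ'²/2` and the scalar field equation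
`φ'' = −3Hφ' − 3e^φ H²(H² + H')` hold. -/
def EdGB (H φ : ℝ → ℝ) (I : Set ℝ) : Prop :=
  ContDiffOn ℝ 1 H I ∧ ContDiffOn ℝ 2 φ I ∧
  (∀ t ∈ I, 3 * H t ^ 2 - 3 * Real.exp (φ t) * deriv φ t * H t ^ 3 = (deriv φ t) ^ 2 / 2) ∧
  (∀ t ∈ I, deriv (deriv φ) t =
      -3 * H t * deriv φ t - 3 * Real.exp (φ t) * H t ^ 2 * (H t ^ 2 + deriv H t))

/-- Power identity: if `(H, φ)` solves the EdGB FLRW system on an open interval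
`I` (with extended-real endpoints `a < b`), then for every `t ∈ I` with `H(t) ≠ 0`,
`(1 − H²e^φ + H'/(3H²))·φ'² + 4H³φ'e^φ + 3H⁶e^{2φ}(1 + H'/H²) = 0`. -/
theorem stmt_3 (a b : EReal) (H φ : ℝ → ℝ)
    (hsys : EdGB H φ {t : ℝ | a < (t : EReal) ∧ (t : EReal) < b}) :
    ∀ t : ℝ, a < (t : EReal) → (t : EReal) < b → H t ≠ 0 →
      (1 - H t ^ 2 * Real.exp (φ t) + deriv H t / (3 * H t ^ 2)) * (deriv φ t) ^ 2
        + 4 * H t ^ 3 * deriv φ t * Real.exp (φ t)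
        + 3 * H t ^ 6 * Real.exp (2 * φ t) * (1 + deriv H t / H t ^ 2) = 0 := by
  intro t ha hb hH0
  set I : Set ℝ := {t : ℝ | a < (t : EReal) ∧ (t : EReal) < b} with hI
  have hIopen : IsOpen I := by
    have : I = Real.toEReal ⁻¹' Set.Ioo a b := rfl
    rw [this]
    exact (isOpen_Ioo).preimage continuous_coe_real_ereal
  have htI : t ∈ I := ⟨ha, hb⟩
  obtain ⟨hHreg, hφreg, hcon, hfield⟩ := hsys
  have hnhds : I ∈ nhds t := hIopen.mem_nhds htI
  -- differentiability facts at t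
  have hHd : DifferentiableAt ℝ H t :=
    ((hHreg.contDiffAt hnhds).differentiableAt one_ne_zero)
  have hφd : DifferentiableAt ℝ φ t :=
    ((hφreg.contDiffAt hnhds).differentiableAt (by norm_num))
  have hφ'reg : ContDiffOn ℝ 1 (deriv φ) I :=
    hφreg.deriv_of_isOpen hIopen (by norm_num : (1:WithTop ℕ∞) + 1 ≤ 2)
  have hφ'd : DifferentiableAt ℝ (deriv φ) t :=
    ((hφ'reg.contDiffAt hnhds).differentiableAt one_ne_zero)
  -- the constraint function is zero on a neighborhood of t
  set G : ℝ → ℝ := fun s =>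
    3 * H s ^ 2 - 3 * (Real.exp (φ s) * deriv φ s * H s ^ 3) - (deriv φ s) ^ 2 / 2 with hG
  have hGzero : G =ᶠ[nhds t] (fun _ => (0 : ℝ)) := by
    filter_upwards [hnhds] with s hs
    have := hcon s hs
    simp [hG]; linarith
  have hGderiv0 : deriv G t = 0 := by
    rw [hGzero.deriv_eq]; simp
  -- compute deriv G t via HasDerivAt
  have hHs : HasDerivAt H (deriv H t) t := hHd.hasDerivAt
  have hφs : HasDerivAt φ (deriv φ t) t := hφd.hasDerivAt
  have hφ's : HasDerivAt (deriv φ) (deriv (deriv φ) t) t := hφ'd.hasDerivAt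
  have hexp : HasDerivAt (fun s => Real.exp (φ s)) (Real.exp (φ t) * deriv φ t) t :=
    (Real.hasDerivAt_exp (φ t)).comp t hφs
  have hGs : HasDerivAt G
      (3 * (2 * H t * deriv H t)
        - 3 * ((Real.exp (φ t) * deriv φ t * deriv φ t + Real.exp (φ t) * deriv (deriv φ) t)
            * H t ^ 3
          + Real.exp (φ t) * deriv φ t * (3 * H t ^ 2 * deriv H t))
        - (2 * deriv φ t * deriv (deriv φ) t) / 2) t := by
    have h1 : HasDerivAt (fun s => H s ^ 2) (2 * H t * deriv H t) t := by
      simpa using hHs.fun_pow 2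
    have h3 : HasDerivAt (fun s => H s ^ 3) (3 * H t ^ 2 * deriv H t) t := by
      simpa using hHs.fun_pow 3
    have hep : HasDerivAt (fun s => Real.exp (φ s) * deriv φ s)
        (Real.exp (φ t) * deriv φ t * deriv φ t + Real.exp (φ t) * deriv (deriv φ) t) t :=
      hexp.mul hφ's
    have heph : HasDerivAt (fun s => Real.exp (φ s) * deriv φ s * H s ^ 3)
        ((Real.exp (φ t) * deriv φ t * deriv φ t + Real.exp (φ t) * deriv (deriv φ) t)
            * H t ^ 3
          + Real.exp (φ t) * deriv φ t * (3 * H t ^ 2 * deriv H t)) t := hep.mul h3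
    have hp2 : HasDerivAt (fun s => (deriv φ s) ^ 2 / 2)
        ((2 * deriv φ t * deriv (deriv φ) t) / 2) t := by
      simpa using (hφ's.pow 2).div_const 2
    exact ((h1.const_mul 3).sub (heph.const_mul 3)).sub hp2
  have hD : 3 * (2 * H t * deriv H t)
        - 3 * ((Real.exp (φ t) * deriv φ t * deriv φ t + Real.exp (φ t) * deriv (deriv φ) t)
            * H t ^ 3
          + Real.exp (φ t) * deriv φ t * (3 * H t ^ 2 * deriv H t))
        - (2 * deriv φ t * deriv (deriv φ) t) / 2 = 0 := by
    rw [← hGs.deriv]; exact hGderiv0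
  -- now pure algebra
  have hC := hcon t htI
  have hS := hfield t htI
  rw [hS] at hD
  have hE2 : Real.exp (2 * φ t) = Real.exp (φ t) * Real.exp (φ t) := by
    rw [← Real.exp_add]; ring_nf
  rw [hE2]
  have hH2 : H t ^ 2 ≠ 0 := pow_ne_zero 2 hH0
  field_simp
  rw [mul_zero]
  refine (mul_eq_zero.mp ?_).resolve_left hH2
  linear_combination H t ^ 3 * hD - 2 * H t ^ 2 * deriv H t * hC
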